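/- Let k, m ∈ ℕ with m ≥ 1, let J_m be the (m−1)-fold zero-mean primitive of the sawtooth J₁, and let p be a trigonometric polynomial of degree ≤ k with the same parity as m (odd polynomial if m odd, even if m even). Then J_m − p has at most 2k + 2 zeros on S¹, and if it has exactly 2k + 2 zeros then all of them are simple. -/

import Mathlib

open Real MeasureTheory intervalIntegral

/-- The 2π-periodic sawtooth: `J₁(x) = x` for `x ∈ (−π, π)` and `J₁(π) = 0`. -/
noncomputable def J1fun (x : ℝ) : ℝ :=
  if x - 2 * π * round (x / (2 * π)) = -π then 0 else x - 2 * π * round (x / (2 * π))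

/-- An odd real trigonometric polynomial of degree at most `n`. -/
def IsOddTrigPoly (n : ℕ) (p : ℝ → ℝ) : Prop :=
  ∃ b : ℕ → ℝ, ∀ x : ℝ, p x = ∑ j ∈ Finset.range (n + 1), b j * Real.sin (j * x)

/-- An even real trigonometric polynomial of degree at most `n`. -/
def IsEvenTrigPoly (n : ℕ) (p : ℝ → ℝ) : Prop :=
  ∃ a : ℕ → ℝ, ∀ x : ℝ, p x = ∑ j ∈ Finset.range (n + 1), a j * Real.cos (j * x)

namespace JmAux

open Set Filter

lemma two_pi_pos : (0:ℝ) < 2 * π := by positivity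

lemma round_eq_zero {x : ℝ} (hx : x ∈ Set.Ioo (-π) π) : round (x / (2 * π)) = 0 := by
  rw [round_eq, Int.floor_eq_zero_iff]
  have h1 : x / (2 * π) < 1/2 := by
    rw [div_lt_iff₀ two_pi_pos]; linarith [hx.2]
  have h2 : -(1/2) < x / (2 * π) := by
    rw [neg_lt, ← neg_div, div_lt_iff₀ two_pi_pos]; linarith [hx.1]
  constructor <;> linarith

lemma J1_eq_of_Ioo {x : ℝ} (hx : x ∈ Set.Ioo (-π) π) : J1fun x = x := by
  have h0 : round (x / (2 * π)) = 0 := round_eq_zero hx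
  have hne : x ≠ -π := by intro h; rw [h] at hx; exact lt_irrefl _ hx.1
  simp [J1fun, h0, hne]

lemma J1_pi : J1fun π = 0 := by
  have h : π / (2 * π) = 1/2 := by
    field_simp
  have h2 : round (π / (2 * π)) = 1 := by rw [h]; norm_num [round_eq]
  simp only [J1fun, h2]
  rw [if_pos]
  push_cast
  ring

lemma J1_periodic : Function.Periodic J1fun (2 * π) := by
  intro x
  have h : (x + 2 * π) / (2 * π) = x / (2 * π) + 1 := by field_simp
  have h2 : round ((x + 2 * π) / (2 * π)) = round (x / (2 * π)) + 1 := by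
    rw [h, round_add_one]
  simp only [J1fun, h2]
  have h3 : x + 2 * π - 2 * π * ((round (x / (2 * π)) : ℝ) + 1) = x - 2 * π * (round (x / (2 * π)) : ℝ) := by
    ring
  push_cast
  rw [h3]

lemma J1_abs_le (x : ℝ) : |J1fun x| ≤ π := by
  unfold J1fun
  split
  · simpa using pi_pos.le
  · have h : x - 2 * π * round (x / (2 * π)) = 2 * π * (x / (2*π) - round (x / (2 * π))) := by
      field_simp
    rw [h, abs_mul, abs_of_pos two_pi_pos]
    have := abs_sub_round (x / (2*π))
    nlinarith [pi_pos]

lemma J1_measurable : Measurable J1fun := by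
  have m1 : Measurable fun x : ℝ => x - 2 * π * (round (x / (2 * π)) : ℝ) := by
    apply measurable_id'.sub
    apply Measurable.const_mul
    have m2 : Measurable fun x : ℝ => round (x / (2 * π)) := by
      simp_rw [round_eq]
      exact ((measurable_id'.div_const _).add_const _).floor
    exact Measurable.comp (measurable_from_top) m2
  unfold J1fun
  exact Measurable.ite (measurableSet_eq_fun m1 measurable_const) measurable_const m1

lemma J1_intervalIntegrable (a b : ℝ) : IntervalIntegrable J1fun volume a b := by
  apply IntervalIntegrable.mono_fun' (g := fun _ => π) intervalIntegrable_const
  · exact J1_measurable.aestronglyMeasurable.restrict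
  · exact Filter.Eventually.of_forall fun x => by
      simpa [Real.norm_eq_abs] using J1_abs_le x

lemma J1_eventuallyEq {x : ℝ} (hx : x - 2 * π * (round (x / (2 * π)) : ℝ) ∈ Set.Ioo (-π) π) :
    ∀ᶠ y in nhds x, J1fun y = y - 2 * π * (round (x / (2 * π)) : ℝ) := by
  set r : ℤ := round (x / (2 * π)) with hr
  have hopen : IsOpen {y : ℝ | y - 2 * π * (r : ℝ) ∈ Set.Ioo (-π) π} :=
    isOpen_Ioo.preimage (by fun_prop)
  filter_upwards [hopen.mem_nhds hx] with y hy
  have hper : J1fun (y - r * (2 * π)) = J1fun y := J1_periodic.sub_int_mul_eq r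
  have h1 : y - 2 * π * (r:ℝ) = y - r * (2 * π) := by ring
  rw [h1, ← hper]
  rw [J1_eq_of_Ioo (by rw [← h1]; exact hy)]

lemma J1_val {x : ℝ} (hx : x - 2 * π * (round (x / (2 * π)) : ℝ) ∈ Set.Ioo (-π) π) :
    J1fun x = x - 2 * π * (round (x / (2 * π)) : ℝ) :=
  Filter.EventuallyEq.eq_of_nhds (J1_eventuallyEq hx)

lemma J1_continuousAt {x : ℝ} (hx : x - 2 * π * (round (x / (2 * π)) : ℝ) ∈ Set.Ioo (-π) π) :
    ContinuousAt J1fun x := by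
  have h : ContinuousAt (fun y : ℝ => y - 2 * π * (round (x / (2 * π)) : ℝ)) x := by fun_prop
  exact h.congr (Filter.EventuallyEq.symm (J1_eventuallyEq hx))

lemma J1_integral_zero : (∫ x in (0:ℝ)..(2*π), J1fun x) = 0 := by
  have hshift := J1_periodic.intervalIntegral_add_eq 0 (-π)
  rw [zero_add] at hshift
  have hpi : -π + 2 * π = π := by ring
  rw [hpi] at hshift
  rw [hshift]
  have hae : ∀ᵐ x : ℝ ∂volume, x ≠ π := by
    rw [ae_iff]
    convert Real.volume_singleton (a := π) using 2
    ext y; simp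
  have hcongr : (∫ x in (-π:ℝ)..π, J1fun x) = ∫ x in (-π:ℝ)..π, x := by
    apply intervalIntegral.integral_congr_ae
    filter_upwards [hae] with y hy hmem
    rw [Set.uIoc_of_le (by linarith [pi_pos] : (-π:ℝ) ≤ π)] at hmem
    exact J1_eq_of_Ioo ⟨hmem.1, lt_of_le_of_ne hmem.2 hy⟩
  rw [hcongr, integral_id]
  ring


section Jlemmas

variable {J : ℕ → ℝ → ℝ}

lemma J_basic (hJ1 : J 1 = J1fun)
    (hJrec : ∀ n, 1 ≤ n → ∀ x : ℝ, J (n + 1) x = J (n + 1) 0 + ∫ t in (0:ℝ)..x, J n t)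
    (hJmean : ∀ n, 1 ≤ n → (∫ x in (0:ℝ)..(2 * π), J (n + 1) x) = 0) :
    ∀ n, 1 ≤ n → (∀ a b, IntervalIntegrable (J n) volume a b) ∧
      Function.Periodic (J n) (2 * π) ∧ ((∫ x in (0:ℝ)..(2*π), J n x) = 0) ∧
      (2 ≤ n → Continuous (J n)) := by
  intro n hn
  induction n, hn using Nat.le_induction with
  | base =>
      rw [hJ1]
      exact ⟨J1_intervalIntegrable, J1_periodic, J1_integral_zero, by omega⟩
  | succ n hn IH =>
      obtain ⟨hint, hper, hmean0, _⟩ := IH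
      have heq : ∀ x, J (n+1) x = J (n+1) 0 + ∫ t in (0:ℝ)..x, J n t := hJrec n hn
      have hcont : Continuous (J (n+1)) := by
        have h1 : Continuous fun x : ℝ => J (n+1) 0 + ∫ t in (0:ℝ)..x, J n t :=
          continuous_const.add (intervalIntegral.continuous_primitive hint 0)
        exact h1.congr fun x => (heq x).symm
      have hint' : ∀ a b, IntervalIntegrable (J (n+1)) volume a b :=
        fun a b => hcont.intervalIntegrable a b
      have hper' : Function.Periodic (J (n+1)) (2 * π) := by
        intro x
        rw [heq (x + 2 * π), heq x]
        have hsplit : (∫ t in (0:ℝ)..(x + 2*π), J n t)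
            = (∫ t in (0:ℝ)..x, J n t) + ∫ t in x..(x + 2*π), J n t :=
          (integral_add_adjacent_intervals (hint 0 x) (hint x _)).symm
        have hshift : (∫ t in x..(x + 2*π), J n t) = ∫ t in (0:ℝ)..(0 + 2*π), J n t :=
          hper.intervalIntegral_add_eq x 0
        rw [hsplit, hshift, zero_add, hmean0]
        ring
      exact ⟨hint', hper', hJmean n hn, fun _ => hcont⟩

lemma J_hasDerivAt (hJ1 : J 1 = J1fun)
    (hJrec : ∀ n, 1 ≤ n → ∀ x : ℝ, J (n + 1) x = J (n + 1) 0 + ∫ t in (0:ℝ)..x, J n t)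
    (hJmean : ∀ n, 1 ≤ n → (∫ x in (0:ℝ)..(2 * π), J (n + 1) x) = 0)
    {n : ℕ} (hn : 2 ≤ n) (x : ℝ) : HasDerivAt (J (n+1)) (J n x) x := by
  obtain ⟨hint, -, -, hcont'⟩ := J_basic hJ1 hJrec hJmean n (by omega)
  have hcont := hcont' hn
  have h1 : HasDerivAt (fun u => ∫ t in (0:ℝ)..u, J n t) (J n x) x :=
    integral_hasDerivAt_right (hint 0 x) (hcont.stronglyMeasurableAtFilter _ _)
      hcont.continuousAt
  have h2 := (hasDerivAt_const x (J (n+1) 0)).add h1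
  rw [zero_add] at h2
  exact h2.congr_of_eventuallyEq (Filter.Eventually.of_forall fun y => hJrec n (by omega) y)

lemma J2_hasDerivAt (hJ1 : J 1 = J1fun)
    (hJrec : ∀ n, 1 ≤ n → ∀ x : ℝ, J (n + 1) x = J (n + 1) 0 + ∫ t in (0:ℝ)..x, J n t)
    {x : ℝ} (hx : x - 2 * π * (round (x / (2 * π)) : ℝ) ∈ Set.Ioo (-π) π) :
    HasDerivAt (J 2) (x - 2 * π * (round (x / (2 * π)) : ℝ)) x := by
  have h1 : HasDerivAt (fun u => ∫ t in (0:ℝ)..u, J 1 t)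
      (x - 2 * π * (round (x / (2 * π)) : ℝ)) x := by
    rw [hJ1]
    have := integral_hasDerivAt_right (J1_intervalIntegrable 0 x)
      J1_measurable.stronglyMeasurable.stronglyMeasurableAtFilter
      (J1_continuousAt hx)
    rwa [J1_val hx] at this
  have h2 := (hasDerivAt_const x (J 2 0)).add h1
  rw [zero_add] at h2
  have h3 : (2:ℕ) = 1 + 1 := rfl
  rw [h3] at h2 ⊢
  exact h2.congr_of_eventuallyEq (Filter.Eventually.of_forall fun y => hJrec 1 le_rfl y)

end Jlemmas

section TPsection

/-- A (mixed) trigonometric polynomial of degree at most `k`. -/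
def TP (k : ℕ) (f : ℝ → ℝ) : Prop :=
  ∃ a b : ℕ → ℝ, ∀ x, f x = ∑ j ∈ Finset.range (k+1),
    (a j * Real.cos (j * x) + b j * Real.sin (j * x))

lemma TP_periodic {k : ℕ} {f : ℝ → ℝ} (hf : TP k f) : Function.Periodic f (2 * π) := by
  obtain ⟨a, b, hab⟩ := hf
  intro x
  rw [hab, hab]
  apply Finset.sum_congr rfl
  intro j _
  have hc : Real.cos ((j:ℝ) * (x + 2*π)) = Real.cos ((j:ℝ) * x) := by
    have := Real.cos_add_int_mul_two_pi ((j:ℝ) * x) (j:ℤ)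
    rw [← this]; congr 1; push_cast; ring
  have hs : Real.sin ((j:ℝ) * (x + 2*π)) = Real.sin ((j:ℝ) * x) := by
    have := Real.sin_add_int_mul_two_pi ((j:ℝ) * x) (j:ℤ)
    rw [← this]; congr 1; push_cast; ring
  rw [hc, hs]

lemma TP_deriv {k : ℕ} {f : ℝ → ℝ} (hf : TP k f) :
    ∃ f' : ℝ → ℝ, TP k f' ∧ ∀ x, HasDerivAt f (f' x) x := by
  obtain ⟨a, b, hab⟩ := hf
  refine ⟨fun x => ∑ j ∈ Finset.range (k+1),
    ((j * b j) * Real.cos (j * x) + (-(j * a j)) * Real.sin (j * x)),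
    ⟨fun j => j * b j, fun j => -(j * a j), fun x => rfl⟩, ?_⟩
  intro x
  have hterm : ∀ j ∈ Finset.range (k+1), HasDerivAt
      (fun y => a j * Real.cos ((j:ℝ) * y) + b j * Real.sin ((j:ℝ) * y))
      ((j * b j) * Real.cos ((j:ℝ) * x) + (-(j * a j)) * Real.sin ((j:ℝ) * x)) x := by
    intro j _
    have hid : HasDerivAt (fun y : ℝ => (j:ℝ) * y) ((j:ℝ)) x := by
      simpa using (hasDerivAt_id x).const_mul (j:ℝ)
    have hc := (hid.cos).const_mul (a j)
    have hs := (hid.sin).const_mul (b j)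
    have := hc.fun_add hs
    exact this.congr_deriv (by ring)
  have hsum := HasDerivAt.fun_sum hterm
  exact (hsum.congr_of_eventuallyEq (Filter.Eventually.of_forall fun y => hab y))

lemma TP_one_sub {k : ℕ} {f : ℝ → ℝ} (hf : TP k f) : TP k (fun x => 1 - f x) := by
  obtain ⟨a, b, hab⟩ := hf
  refine ⟨fun j => (if j = 0 then 1 else 0) - a j, fun j => - b j, ?_⟩
  intro x
  have h1 : (∑ j ∈ Finset.range (k+1),
      (((if j = 0 then (1:ℝ) else 0) - a j) * Real.cos (j * x) + (- b j) * Real.sin (j * x)))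
      = (∑ j ∈ Finset.range (k+1), (if j = 0 then (1:ℝ) else 0) * Real.cos (j * x))
        - ∑ j ∈ Finset.range (k+1), (a j * Real.cos (j * x) + b j * Real.sin (j * x)) := by
    rw [← Finset.sum_sub_distrib]
    apply Finset.sum_congr rfl
    intro j _
    ring
  rw [h1, ← hab]
  congr 1
  rw [Finset.sum_eq_single 0]
  · norm_num
  · intro j _ hj; simp [hj]
  · intro h; simp at h

lemma TP_zero {k : ℕ} {f : ℝ → ℝ} (hf : TP k f) (F : Finset ℝ)
    (hF : ↑F ⊆ Set.Ioc (-π) π) (hz : ∀ x ∈ F, f x = 0) (hcard : 2*k+1 ≤ F.card) :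
    ∀ x, f x = 0 := by
  obtain ⟨a, b, hab⟩ := hf
  set P : Polynomial ℂ := ∑ j ∈ Finset.range (k+1),
    (Polynomial.C (((a j : ℂ) - b j * Complex.I)/2) * Polynomial.X ^ (k+j)
     + Polynomial.C (((a j : ℂ) + b j * Complex.I)/2) * Polynomial.X ^ (k-j)) with hP
  have key : ∀ x : ℝ, P.eval (Complex.exp (x * Complex.I))
      = Complex.exp ((k:ℝ) * x * Complex.I) * (f x : ℂ) := by
    intro x
    rw [hab x]
    push_cast
    rw [hP, Polynomial.eval_finset_sum, Finset.mul_sum]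
    apply Finset.sum_congr rfl
    intro j hj
    have hjk : j ≤ k := Nat.lt_succ_iff.mp (Finset.mem_range.mp hj)
    simp only [Polynomial.eval_add, Polynomial.eval_mul, Polynomial.eval_C,
      Polynomial.eval_pow, Polynomial.eval_X]
    have hI : (Complex.I)^2 = -1 := Complex.I_sq
    have E1 : (Complex.exp ((x:ℂ) * Complex.I))^(k+j)
        = Complex.exp ((k:ℂ) * x * Complex.I) * Complex.exp ((j:ℂ) * x * Complex.I) := by
      rw [← Complex.exp_nat_mul, ← Complex.exp_add]; congr 1; push_cast; ring
    have E2 : (Complex.exp ((x:ℂ) * Complex.I))^(k-j)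
        = Complex.exp ((k:ℂ) * x * Complex.I) * Complex.exp (-((j:ℂ) * x) * Complex.I) := by
      rw [← Complex.exp_nat_mul, ← Complex.exp_add]; congr 1; rw [Nat.cast_sub hjk]
      push_cast; ring
    have E3 : Complex.exp ((j:ℂ) * x * Complex.I)
        = (Real.cos (j * x) : ℂ) + (Real.sin (j * x) : ℂ) * Complex.I := by
      rw [Complex.exp_mul_I]; push_cast; ring
    have E4 : Complex.exp (-((j:ℂ) * x) * Complex.I)
        = (Real.cos (j * x) : ℂ) - (Real.sin (j * x) : ℂ) * Complex.I := by
      rw [Complex.exp_mul_I, Complex.cos_neg, Complex.sin_neg]; push_cast; ring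
    rw [E1, E2, E3, E4]
    push_cast
    linear_combination (-(Complex.exp ((k:ℂ) * (x:ℂ) * Complex.I) * ((b j : ℝ) : ℂ)
      * Complex.sin ((j:ℂ) * (x:ℂ)))) * hI
  have hdeg : P.natDegree ≤ 2*k := by
    rw [hP]
    apply Polynomial.natDegree_sum_le_of_forall_le
    intro j hj
    have hjk : j ≤ k := Nat.lt_succ_iff.mp (Finset.mem_range.mp hj)
    apply le_trans (Polynomial.natDegree_add_le _ _)
    apply max_le
    · exact le_trans (Polynomial.natDegree_C_mul_le _ _) (by rw [Polynomial.natDegree_X_pow]; omega)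
    · exact le_trans (Polynomial.natDegree_C_mul_le _ _) (by rw [Polynomial.natDegree_X_pow]; omega)
  have hinj : Set.InjOn (fun x : ℝ => Complex.exp ((x:ℂ) * Complex.I)) ↑F := by
    intro x hx y hy hxy
    have hx' := hF hx
    have hy' := hF hy
    simp only at hxy
    obtain ⟨n, hn⟩ := Complex.exp_eq_exp_iff_exists_int.mp hxy
    have hn' : (x:ℂ) * Complex.I = ((y:ℝ) + n * (2*π)) * Complex.I := by
      rw [hn]; push_cast; ring
    have hxy' : (x:ℂ) = ((y:ℝ) + n * (2*π) : ℝ) := by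
      have := mul_right_cancel₀ Complex.I_ne_zero hn'
      rw [this]; push_cast; ring
    have hxyr : x = y + n * (2*π) := by exact_mod_cast hxy'
    have hn0 : n = 0 := by
      have h1 : x - y < 2*π := by
        have := hx'.2; have := hy'.1; linarith [pi_pos]
      have h2 : -(2*π) < x - y := by
        have := hx'.1; have := hy'.2; linarith [pi_pos]
      have hb1 : (n:ℝ) * (2*π) < 2*π := by linarith [hxyr]
      have hb2 : -(2*π) < (n:ℝ) * (2*π) := by linarith [hxyr]
      have hn1 : (n:ℝ) < 1 := by nlinarith [two_pi_pos]
      have hn2 : (-1:ℝ) < n := by nlinarith [two_pi_pos]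
      have : n < 1 := by exact_mod_cast hn1
      have : (-1:ℤ) < n := by exact_mod_cast hn2
      omega
    rw [hxyr, hn0]; push_cast; ring
  have hPz : P = 0 := by
    apply Polynomial.eq_zero_of_natDegree_lt_card_of_eval_eq_zero' P
      (F.image (fun x : ℝ => Complex.exp ((x:ℂ) * Complex.I)))
    · intro z hz'
      obtain ⟨x, hxF, rfl⟩ := Finset.mem_image.mp hz'
      rw [key x, hz x hxF]
      simp
    · rw [Finset.card_image_of_injOn hinj]
      omega
  intro x
  have hk := key x
  rw [hPz] at hk
  simp only [Polynomial.eval_zero] at hk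
  have := hk.symm
  rcases mul_eq_zero.mp this with h | h
  · exact absurd h (Complex.exp_ne_zero _)
  · exact_mod_cast h

end TPsection

section Rolle

/-- Between `n` zeros of `f` in an order-connected set `U` where `f` is differentiable,
there are `n - 1` zeros of `f'`, strictly between the extreme zeros and avoiding `F`. -/
lemma rolleFinset {U : Set ℝ} (hU : U.OrdConnected) {f f' : ℝ → ℝ}
    (hd : ∀ x ∈ U, HasDerivAt f (f' x) x) :
    ∀ (n : ℕ) (F : Finset ℝ) (hne : F.Nonempty), F.card = n → ↑F ⊆ U →
      (∀ x ∈ F, f x = 0) →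
      ∃ G : Finset ℝ, G.card + 1 = F.card ∧ ↑G ⊆ U ∧ (∀ y ∈ G, f' y = 0) ∧
        (∀ y ∈ G, F.min' hne < y ∧ y < F.max' hne) ∧ (∀ y ∈ G, y ∉ F) := by
  intro n
  induction n with
  | zero =>
      intro F hne hcard _ _
      exact absurd hcard (by simpa using Finset.card_ne_zero_of_mem hne.choose_spec)
  | succ n IH =>
      intro F hne hcard hFU hFz
      rcases Nat.eq_zero_or_pos n with hn0 | hnpos
      · exact ⟨∅, by simp [hcard, hn0], by simp, by simp, by simp, by simp⟩
      -- F.card ≥ 2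
      have hcard2 : 2 ≤ F.card := by omega
      set a := F.min' hne with ha
      have haF : a ∈ F := F.min'_mem hne
      set F' := F.erase a with hF'
      have hne' : F'.Nonempty := by
        rw [hF', ← Finset.card_pos, Finset.card_erase_of_mem haF]
        omega
      have hcard' : F'.card = n := by
        rw [hF', Finset.card_erase_of_mem haF, hcard]
        omega
      have hF'sub : F' ⊆ F := Finset.erase_subset _ _
      set b := F'.min' hne' with hb
      have hbF' : b ∈ F' := F'.min'_mem hne'
      have hbF : b ∈ F := hF'sub hbF'
      have hab : a < b := by
        have h1 : a ≤ b := F.min'_le b hbF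
        have h2 : b ≠ a := Finset.ne_of_mem_erase hbF'
        exact lt_of_le_of_ne h1 (Ne.symm h2)
      have haU : a ∈ U := hFU haF
      have hbU : b ∈ U := hFU hbF
      have hIcc : Set.Icc a b ⊆ U := hU.out haU hbU
      -- Rolle on [a, b]
      obtain ⟨w, hw, hw0⟩ := exists_hasDerivAt_eq_zero hab
        (fun x hx => (hd x (hIcc hx)).continuousAt.continuousWithinAt)
        ((hFz a haF).trans (hFz b hbF).symm)
        (fun x hx => hd x (hIcc (Set.mem_Icc_of_Ioo hx)))
      obtain ⟨G', hG'card, hG'U, hG'z, hG'mem, hG'F⟩ := IH F' hne' hcard'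
        (fun x hx => hFU (hF'sub hx)) (fun x hx => hFz x (hF'sub hx))
      have hmaxeq : F'.max' hne' = F.max' hne := by
        apply le_antisymm
        · exact Finset.max'_le _ hne' _ (fun y hy => F.le_max' y (hF'sub hy))
        · apply Finset.le_max'
          rw [hF', Finset.mem_erase]
          refine ⟨?_, F.max'_mem hne⟩
          have := F.min'_lt_max'_of_card (by omega : 1 < F.card)
          rw [← ha] at this
          exact ne_of_gt this
      have hwG' : w ∉ G' := by
        intro hmem
        have := (hG'mem w hmem).1
        rw [← hb] at this
        exact absurd hw.2 (not_lt.mpr this.le)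
      refine ⟨insert w G', ?_, ?_, ?_, ?_, ?_⟩
      · rw [Finset.card_insert_of_notMem hwG', hG'card, hcard', hcard]
      · intro y hy
        rcases Finset.mem_insert.mp (by exact_mod_cast hy) with rfl | hy'
        · exact hIcc (Set.mem_Icc_of_Ioo hw)
        · exact hG'U hy'
      · intro y hy
        rcases Finset.mem_insert.mp hy with rfl | hy'
        · exact hw0
        · exact hG'z y hy'
      · intro y hy
        rcases Finset.mem_insert.mp hy with rfl | hy'
        · constructor
          · exact hw.1
          · calc y < b := hw.2
              _ ≤ F'.max' hne' := F'.le_max' b hbF'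
              _ = F.max' hne := hmaxeq
        · constructor
          · calc F.min' hne = a := rfl
              _ < b := hab
              _ ≤ F'.min' hne' := le_of_eq hb
              _ < y := (hG'mem y hy').1
          · rw [← hmaxeq]; exact (hG'mem y hy').2
      · intro y hy
        rcases Finset.mem_insert.mp hy with rfl | hy'
        · -- w ∈ (a,b) and no element of F is in (a,b)
          intro hyF
          have hya : y ≠ a := ne_of_gt hw.1
          have hyF' : y ∈ F' := Finset.mem_erase.mpr ⟨hya, hyF⟩
          have : b ≤ y := F'.min'_le y hyF'
          exact absurd hw.2 (not_lt.mpr this)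
        · intro hyF
          have hya : y ≠ a := by
            have : a < y := by
              calc a < b := hab
                _ ≤ F'.min' hne' := le_of_eq hb
                _ < y := (hG'mem y hy').1
            exact ne_of_gt this
          exact hG'F y hy' (Finset.mem_erase.mpr ⟨hya, hyF⟩)

end Rolle

section Counting

lemma LA0 {k : ℕ} {q q' : ℝ → ℝ} (hq : TP k q) (hq' : TP k q')
    (hd : ∀ x, HasDerivAt q (q' x) x)
    (G : Finset ℝ) (hG : ↑G ⊆ Set.Ioc (-π) π) (hz : ∀ y ∈ G, q' y = 1)
    (hcard : 2*k+1 ≤ G.card) : False := by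
  have hall : ∀ x, 1 - q' x = 0 :=
    TP_zero (TP_one_sub hq') G hG (fun y hy => by rw [hz y hy]; ring) hcard
  have hq'1 : ∀ x, q' x = 1 := fun x => by have := hall x; linarith
  have hdh : ∀ x, HasDerivAt (fun y => y - q y) 0 x := by
    intro x
    have h1 := (hasDerivAt_id x).fun_sub (hd x)
    rw [hq'1 x] at h1
    simpa using h1
  have hconst := is_const_of_deriv_eq_zero (fun x => (hdh x).differentiableAt)
    (fun x => (hdh x).deriv) (2*π) 0
  have hper : q (2*π) = q 0 := by
    have := TP_periodic hq 0
    rwa [zero_add] at this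
  simp only [hper] at hconst
  have h2 : (2:ℝ)*π = 0 := by linarith
  linarith [two_pi_pos]

lemma LA1 {k : ℕ} {q q' : ℝ → ℝ} (hq : TP k q) (hq' : TP k q')
    (hd : ∀ x, HasDerivAt q (q' x) x)
    (F : Finset ℝ) (hF : ↑F ⊆ Set.Ioo (-π) π) (hz : ∀ y ∈ F, y = q y) :
    F.card ≤ 2*k+1 := by
  by_contra hc
  push_neg at hc
  have hne : F.Nonempty := Finset.card_pos.mp (by omega)
  obtain ⟨G, hGcard, -, hGz, hGmem, -⟩ := rolleFinset (U := Set.univ) Set.ordConnected_univ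
    (f := fun y => y - q y) (f' := fun y => 1 - q' y)
    (fun x _ => by simpa using (hasDerivAt_id x).fun_sub (hd x))
    F.card F hne rfl (by simp) (fun x hx => sub_eq_zero.mpr (hz x hx))
  have hmin := hF (Finset.mem_coe.mpr (F.min'_mem hne))
  have hmax := hF (Finset.mem_coe.mpr (F.max'_mem hne))
  apply LA0 hq hq' hd G ?_ ?_ (by omega)
  · intro y hy
    have hm := hGmem y (Finset.mem_coe.mp hy)
    exact ⟨lt_trans hmin.1 hm.1, le_of_lt (lt_trans hm.2 hmax.2)⟩
  · intro y hy
    have := hGz y hy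
    linarith

lemma LA2 {k : ℕ} {q q' : ℝ → ℝ} (hq : TP k q) (hq' : TP k q')
    (hd : ∀ x, HasDerivAt q (q' x) x)
    (F : Finset ℝ) (hF : ↑F ⊆ Set.Ioo (-π) π) (hz : ∀ y ∈ F, y = q y)
    {x : ℝ} (hxF : x ∈ F) (hx1 : q' x = 1) : F.card ≤ 2*k := by
  by_contra hc
  push_neg at hc
  have hne : F.Nonempty := ⟨x, hxF⟩
  obtain ⟨G, hGcard, -, hGz, hGmem, hGF⟩ := rolleFinset (U := Set.univ) Set.ordConnected_univ
    (f := fun y => y - q y) (f' := fun y => 1 - q' y)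
    (fun x _ => by simpa using (hasDerivAt_id x).fun_sub (hd x))
    F.card F hne rfl (by simp) (fun y hy => sub_eq_zero.mpr (hz y hy))
  have hxG : x ∉ G := fun h => hGF x h hxF
  have hmin := hF (Finset.mem_coe.mpr (F.min'_mem hne))
  have hmax := hF (Finset.mem_coe.mpr (F.max'_mem hne))
  apply LA0 hq hq' hd (insert x G) ?_ ?_ ?_
  · intro y hy
    rcases Finset.mem_insert.mp (Finset.mem_coe.mp hy) with rfl | hy'
    · have := hF (Finset.mem_coe.mpr hxF)
      exact ⟨this.1, this.2.le⟩
    · have hm := hGmem y hy'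
      exact ⟨lt_trans hmin.1 hm.1, le_of_lt (lt_trans hm.2 hmax.2)⟩
  · intro y hy
    rcases Finset.mem_insert.mp hy with rfl | hy'
    · exact hx1
    · have := hGz y hy'; linarith
  · rw [Finset.card_insert_of_notMem hxG]
    omega

end Counting

section Level2

lemma round_eq_one {x : ℝ} (h1 : π < x) (h2 : x < 3*π) : round (x / (2 * π)) = 1 := by
  have e1 : (1:ℝ)/2 ≤ x / (2*π) := by
    rw [le_div_iff₀ two_pi_pos]; linarith
  have e2 : x / (2*π) < 3/2 := by
    rw [div_lt_iff₀ two_pi_pos]; linarith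
  rw [round_eq, Int.floor_eq_iff]
  constructor
  · push_cast; linarith
  · push_cast; linarith

variable {J : ℕ → ℝ → ℝ} {k : ℕ} {q q1 q2 : ℝ → ℝ}

/-- Derivative of `J 2 - q` inside `(-π, π)`. -/
lemma hasDerivAt_J2_sub (hJ1 : J 1 = J1fun)
    (hJrec : ∀ n, 1 ≤ n → ∀ x : ℝ, J (n + 1) x = J (n + 1) 0 + ∫ t in (0:ℝ)..x, J n t)
    (hdq : ∀ x, HasDerivAt q (q1 x) x)
    {x : ℝ} (hx : x ∈ Set.Ioo (-π) π) :
    HasDerivAt (fun y => J 2 y - q y) (x - q1 x) x := by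
  have h0 : round (x / (2*π)) = 0 := round_eq_zero hx
  have hx' : x - 2 * π * (round (x / (2 * π)) : ℝ) ∈ Set.Ioo (-π) π := by
    rw [h0]; push_cast; simpa using hx
  have h1 := (J2_hasDerivAt hJ1 hJrec hx').fun_sub (hdq x)
  rw [h0] at h1
  push_cast at h1
  simpa using h1

/-- Derivative of `J 2 - q` inside `(π, 3π)`. -/
lemma hasDerivAt_J2_sub' (hJ1 : J 1 = J1fun)
    (hJrec : ∀ n, 1 ≤ n → ∀ x : ℝ, J (n + 1) x = J (n + 1) 0 + ∫ t in (0:ℝ)..x, J n t)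
    (hdq : ∀ x, HasDerivAt q (q1 x) x)
    {x : ℝ} (hx : x ∈ Set.Ioo π (3*π)) :
    HasDerivAt (fun y => J 2 y - q y) ((x - 2*π) - q1 x) x := by
  have h0 : round (x / (2*π)) = 1 := round_eq_one hx.1 hx.2
  have hx' : x - 2 * π * (round (x / (2 * π)) : ℝ) ∈ Set.Ioo (-π) π := by
    rw [h0]; push_cast
    constructor <;> [linarith [hx.1]; linarith [hx.2]]
  have h1 := (J2_hasDerivAt hJ1 hJrec hx').fun_sub (hdq x)
  rw [h0] at h1
  push_cast at h1
  exact h1.congr_deriv (by ring)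

lemma LB1 (hJ1 : J 1 = J1fun)
    (hJrec : ∀ n, 1 ≤ n → ∀ x : ℝ, J (n + 1) x = J (n + 1) 0 + ∫ t in (0:ℝ)..x, J n t)
    (hJmean : ∀ n, 1 ≤ n → (∫ x in (0:ℝ)..(2 * π), J (n + 1) x) = 0)
    (hq : TP k q) (hq1 : TP k q1) (hq2 : TP k q2)
    (hdq : ∀ x, HasDerivAt q (q1 x) x) (hdq1 : ∀ x, HasDerivAt q1 (q2 x) x)
    (F : Finset ℝ) (hF : ↑F ⊆ Set.Ioc (-π) π) (hz : ∀ x ∈ F, J 2 x = q x) :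
    F.card ≤ 2*k+2 ∧ (π ∈ F → F.card ≤ 2*k+1) := by
  set f := fun y => J 2 y - q y with hf
  have hfz : ∀ x ∈ F, f x = 0 := fun x hx => sub_eq_zero.mpr (hz x hx)
  have hfc : Continuous f := by
    have hJc : Continuous (J 2) :=
      (J_basic hJ1 hJrec hJmean 2 (by omega)).2.2.2 le_rfl
    exact hJc.sub (Differentiable.continuous (fun x => (hdq x).differentiableAt))
  have hfper : ∀ y, f (y + 2*π) = f y := by
    intro y
    have hJper := (J_basic hJ1 hJrec hJmean 2 (by omega)).2.1
    simp only [hf, hJper y, TP_periodic hq y]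
  have hd : ∀ x ∈ Set.Ioo (-π) π, HasDerivAt f ((fun y => y - q1 y) x) x :=
    fun x hx => hasDerivAt_J2_sub hJ1 hJrec hdq hx
  by_cases hπ : π ∈ F
  · -- π is a zero: get F.card ≤ 2k+1
    suffices h : F.card ≤ 2*k+1 by exact ⟨by omega, fun _ => h⟩
    set F' := F.erase π with hF'
    have hF'Ioo : ↑F' ⊆ Set.Ioo (-π) π := by
      intro y hy
      obtain ⟨hyne, hyF⟩ := Finset.mem_erase.mp (Finset.mem_coe.mp hy)
      have := hF (Finset.mem_coe.mpr hyF)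
      exact ⟨this.1, lt_of_le_of_ne this.2 hyne⟩
    rcases F'.eq_empty_or_nonempty with hemp | hne'
    · have : F.card ≤ 1 := by
        have := Finset.card_erase_of_mem hπ
        rw [← hF', hemp] at this
        simp at this
        omega
      omega
    obtain ⟨G, hGcard, -, hGz, hGmem, -⟩ := rolleFinset (U := Set.Ioo (-π) π)
      Set.ordConnected_Ioo hd F'.card F' hne' rfl hF'Ioo
      (fun x hx => hfz x (Finset.mem_of_mem_erase hx))
    set A := F'.min' hne' with hA
    set B := F'.max' hne' with hB
    have hAmem := hF'Ioo (Finset.mem_coe.mpr (F'.min'_mem hne'))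
    have hBmem := hF'Ioo (Finset.mem_coe.mpr (F'.max'_mem hne'))
    -- Rolle on [B, π]
    obtain ⟨w1, hw1, hw1z⟩ := exists_hasDerivAt_eq_zero (f := f)
      (f' := fun y => y - q1 y) hBmem.2
      (hfc.continuousOn)
      (by rw [hfz B (Finset.mem_of_mem_erase (F'.max'_mem hne')), hfz π hπ])
      (fun x hx => hd x ⟨lt_trans hBmem.1 hx.1, hx.2⟩)
    -- Rolle on [π, A + 2π]
    have hA2 : π < A + 2*π := by linarith [hAmem.1]
    obtain ⟨w2', hw2', hw2'z⟩ := exists_hasDerivAt_eq_zero (f := f)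
      (f' := fun y => (y - 2*π) - q1 y) hA2
      (hfc.continuousOn)
      (by rw [hfz π hπ, hfper A, hfz A (Finset.mem_of_mem_erase (F'.min'_mem hne'))])
      (fun x hx => hasDerivAt_J2_sub' hJ1 hJrec hdq ⟨hx.1, by linarith [hx.2, hAmem.2]⟩)
    set w2 := w2' - 2*π with hw2def
    have hw2Ioo : w2 ∈ Set.Ioo (-π) A := by
      constructor
      · simp only [hw2def]; linarith [hw2'.1]
      · simp only [hw2def]; linarith [hw2'.2]
    have hw2z : w2 - q1 w2 = 0 := by
      have hper1 : q1 w2 = q1 w2' := by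
        have h := TP_periodic hq1 w2
        have e : w2 + 2*π = w2' := by simp only [hw2def]; ring
        rw [e] at h
        exact h.symm
      rw [hper1]
      exact hw2'z
    -- assemble
    have hw2G : w2 ∉ G := by
      intro h
      have := (hGmem w2 h).1
      linarith [hw2Ioo.2]
    have hw1G : w1 ∉ insert w2 G := by
      intro h
      have hAB : A ≤ B := F'.min'_le B (F'.max'_mem hne')
      rcases Finset.mem_insert.mp h with h' | h'
      · rw [h'] at hw1
        linarith [hw1.1, hw2Ioo.2]
      · have := (hGmem w1 h').2
        linarith [hw1.1]
    set H := insert w1 (insert w2 G) with hH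
    have hHcard : H.card = F.card := by
      rw [hH, Finset.card_insert_of_notMem hw1G, Finset.card_insert_of_notMem hw2G,
        hGcard]
      rw [hF', Finset.card_erase_of_mem hπ]
      have : 1 ≤ F.card := Finset.card_pos.mpr ⟨π, hπ⟩
      omega
    have hHsub : ↑H ⊆ Set.Ioo (-π) π := by
      intro y hy
      rcases Finset.mem_insert.mp (Finset.mem_coe.mp hy) with rfl | hy'
      · exact ⟨lt_trans hBmem.1 hw1.1, hw1.2⟩
      rcases Finset.mem_insert.mp hy' with rfl | hy''
      · exact ⟨hw2Ioo.1, lt_trans hw2Ioo.2 hAmem.2⟩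
      · have hm := hGmem y hy''
        exact ⟨lt_trans hAmem.1 hm.1, lt_trans hm.2 hBmem.2⟩
    have hHz : ∀ y ∈ H, y = q1 y := by
      intro y hy
      rcases Finset.mem_insert.mp hy with rfl | hy'
      · have := hw1z; linarith
      rcases Finset.mem_insert.mp hy' with rfl | hy''
      · linarith [hw2z]
      · have := hGz y hy''; linarith
    have := LA1 hq1 hq2 hdq1 H hHsub hHz
    omega
  · -- π not a zero
    have hFIoo : ↑F ⊆ Set.Ioo (-π) π := by
      intro y hy
      have h1 := hF hy
      have h2 : y ≠ π := fun h => hπ (h ▸ Finset.mem_coe.mp hy)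
      exact ⟨h1.1, lt_of_le_of_ne h1.2 h2⟩
    refine ⟨?_, fun h => absurd h hπ⟩
    rcases F.eq_empty_or_nonempty with hemp | hne
    · simp [hemp]
    obtain ⟨G, hGcard, -, hGz, hGmem, -⟩ := rolleFinset (U := Set.Ioo (-π) π)
      Set.ordConnected_Ioo hd F.card F hne rfl hFIoo hfz
    have hmin := hFIoo (Finset.mem_coe.mpr (F.min'_mem hne))
    have hmax := hFIoo (Finset.mem_coe.mpr (F.max'_mem hne))
    have hGsub : ↑G ⊆ Set.Ioo (-π) π := by
      intro y hy
      have hm := hGmem y (Finset.mem_coe.mp hy)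
      exact ⟨lt_trans hmin.1 hm.1, lt_trans hm.2 hmax.2⟩
    have hGz' : ∀ y ∈ G, y = q1 y := fun y hy => by have := hGz y hy; linarith
    have := LA1 hq1 hq2 hdq1 G hGsub hGz'
    omega

lemma LB2 (hJ1 : J 1 = J1fun)
    (hJrec : ∀ n, 1 ≤ n → ∀ x : ℝ, J (n + 1) x = J (n + 1) 0 + ∫ t in (0:ℝ)..x, J n t)
    (hJmean : ∀ n, 1 ≤ n → (∫ x in (0:ℝ)..(2 * π), J (n + 1) x) = 0)
    (hq : TP k q) (hq1 : TP k q1) (hq2 : TP k q2)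
    (hdq : ∀ x, HasDerivAt q (q1 x) x) (hdq1 : ∀ x, HasDerivAt q1 (q2 x) x)
    (F : Finset ℝ) (hF : ↑F ⊆ Set.Ioc (-π) π) (hz : ∀ x ∈ F, J 2 x = q x)
    (hcard : F.card = 2*k+2) {x : ℝ} (hxF : x ∈ F) (hxπ : x ≠ π)
    (hxq : x = q1 x) : False := by
  have hπF : π ∉ F := by
    intro h
    have := (LB1 hJ1 hJrec hJmean hq hq1 hq2 hdq hdq1 F hF hz).2 h
    omega
  have hFIoo : ↑F ⊆ Set.Ioo (-π) π := by
    intro y hy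
    have h1 := hF hy
    have h2 : y ≠ π := fun h => hπF (h ▸ Finset.mem_coe.mp hy)
    exact ⟨h1.1, lt_of_le_of_ne h1.2 h2⟩
  have hne : F.Nonempty := ⟨x, hxF⟩
  have hd : ∀ y ∈ Set.Ioo (-π) π, HasDerivAt (fun y => J 2 y - q y) ((fun y => y - q1 y) y) y :=
    fun y hy => hasDerivAt_J2_sub hJ1 hJrec hdq hy
  obtain ⟨G, hGcard, -, hGz, hGmem, hGF⟩ := rolleFinset (U := Set.Ioo (-π) π)
    Set.ordConnected_Ioo hd F.card F hne rfl hFIoo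
    (fun y hy => sub_eq_zero.mpr (hz y hy))
  have hmin := hFIoo (Finset.mem_coe.mpr (F.min'_mem hne))
  have hmax := hFIoo (Finset.mem_coe.mpr (F.max'_mem hne))
  have hxG : x ∉ G := fun h => hGF x h hxF
  have hsub : ↑(insert x G) ⊆ Set.Ioo (-π) π := by
    intro y hy
    rcases Finset.mem_insert.mp (Finset.mem_coe.mp hy) with rfl | hy'
    · exact hFIoo (Finset.mem_coe.mpr hxF)
    · have hm := hGmem y hy'
      exact ⟨lt_trans hmin.1 hm.1, lt_trans hm.2 hmax.2⟩
  have hzs : ∀ y ∈ insert x G, y = q1 y := by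
    intro y hy
    rcases Finset.mem_insert.mp hy with rfl | hy'
    · exact hxq
    · have := hGz y hy'; linarith
  have := LA1 hq1 hq2 hdq1 (insert x G) hsub hzs
  rw [Finset.card_insert_of_notMem hxG] at this
  omega

end Level2

section Chain

variable {J : ℕ → ℝ → ℝ} {k : ℕ} {q q1 : ℝ → ℝ}

/-- Cyclic Rolle: from `N ≥ 2` zeros of `J (n+1) - q` (with `n ≥ 2`) in `(-π, π]`,
produce `N` zeros of `J n - q1` in `(-π, π]`, disjoint from the original zeros. -/
lemma cyc (hJ1 : J 1 = J1fun)
    (hJrec : ∀ n, 1 ≤ n → ∀ x : ℝ, J (n + 1) x = J (n + 1) 0 + ∫ t in (0:ℝ)..x, J n t)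
    (hJmean : ∀ n, 1 ≤ n → (∫ x in (0:ℝ)..(2 * π), J (n + 1) x) = 0)
    {n : ℕ} (hn : 2 ≤ n) (hq : TP k q) (hq1 : TP k q1)
    (hdq : ∀ x, HasDerivAt q (q1 x) x)
    (F : Finset ℝ) (hF : ↑F ⊆ Set.Ioc (-π) π) (hz : ∀ x ∈ F, J (n+1) x = q x)
    (h2 : 2 ≤ F.card) :
    ∃ T : Finset ℝ, T.card = F.card ∧ ↑T ⊆ Set.Ioc (-π) π ∧
      (∀ y ∈ T, J n y = q1 y) ∧ ∀ y ∈ T, y ∉ F := by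
  set f := fun y => J (n+1) y - q y with hf
  have hd : ∀ x, HasDerivAt f (J n x - q1 x) x :=
    fun x => (J_hasDerivAt hJ1 hJrec hJmean hn x).sub (hdq x)
  have hfz : ∀ x ∈ F, f x = 0 := fun x hx => sub_eq_zero.mpr (hz x hx)
  have hne : F.Nonempty := Finset.card_pos.mp (by omega)
  obtain ⟨G, hGcard, -, hGz, hGmem, hGF⟩ := rolleFinset (U := Set.univ)
    Set.ordConnected_univ (f := f) (f' := fun x => J n x - q1 x)
    (fun x _ => hd x) F.card F hne rfl (by simp) hfz
  set A := F.min' hne with hA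
  set B := F.max' hne with hB
  have hAmem := hF (Finset.mem_coe.mpr (F.min'_mem hne))
  have hBmem := hF (Finset.mem_coe.mpr (F.max'_mem hne))
  have hAB : A ≤ B := F.min'_le B (F.max'_mem hne)
  have hlt : B < A + 2*π := by
    have := hBmem.2; have := hAmem.1; linarith
  have hfper : ∀ y, f (y + 2*π) = f y := by
    intro y
    have hJper := (J_basic hJ1 hJrec hJmean (n+1) (by omega)).2.1
    simp only [hf, hJper y, TP_periodic hq y]
  obtain ⟨w, hw, hwz⟩ := exists_hasDerivAt_eq_zero (f := f)
    (f' := fun x => J n x - q1 x) hlt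
    ((Differentiable.continuous (fun x => (hd x).differentiableAt)).continuousOn)
    (by rw [hfper A, hfz A (F.min'_mem hne), hfz B (F.max'_mem hne)])
    (fun x _ => hd x)
  set w' := if w ≤ π then w else w - 2*π with hw'
  have hJnper := (J_basic hJ1 hJrec hJmean n (by omega)).2.1
  have hw'z : J n w' - q1 w' = 0 := by
    by_cases hcase : w ≤ π
    · simp only [hw', if_pos hcase]; exact hwz
    · simp only [hw', if_neg hcase]
      have ee : w - 2*π + 2*π = w := by ring
      have e1 : J n (w - 2*π) = J n w := by
        have h := hJnper (w - 2*π)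
        rw [ee] at h
        exact h.symm
      have e2 : q1 (w - 2*π) = q1 w := by
        have h := TP_periodic hq1 (w - 2*π)
        rw [ee] at h
        exact h.symm
      rw [e1, e2]; exact hwz
  have hw'Ioc : w' ∈ Set.Ioc (-π) π := by
    by_cases hcase : w ≤ π
    · simp only [hw', if_pos hcase]
      exact ⟨lt_trans hAmem.1 (lt_of_le_of_lt hAB hw.1), hcase⟩
    · simp only [hw', if_neg hcase]
      push_neg at hcase
      constructor
      · linarith
      · have := hw.2; linarith [hAmem.2]
  have hw'F : w' ∉ F := by
    by_cases hcase : w ≤ π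
    · simp only [hw', if_pos hcase]
      intro hmem
      have := F.le_max' w hmem
      linarith [hw.1]
    · simp only [hw', if_neg hcase]
      intro hmem
      have := F.min'_le _ hmem
      have := hw.2
      linarith
  have hw'G : w' ∉ G := by
    by_cases hcase : w ≤ π
    · simp only [hw', if_pos hcase]
      intro hmem
      have := (hGmem w hmem).2
      linarith [hw.1]
    · simp only [hw', if_neg hcase]
      intro hmem
      have := (hGmem _ hmem).1
      have := hw.2
      linarith
  refine ⟨insert w' G, ?_, ?_, ?_, ?_⟩
  · rw [Finset.card_insert_of_notMem hw'G, hGcard]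
  · intro y hy
    rcases Finset.mem_insert.mp (Finset.mem_coe.mp hy) with rfl | hy'
    · exact hw'Ioc
    · have hm := hGmem y hy'
      have h1 := hAmem.1
      have h2 := hBmem.2
      exact ⟨lt_trans h1 hm.1, le_of_lt (lt_of_lt_of_le hm.2 h2)⟩
  · intro y hy
    rcases Finset.mem_insert.mp hy with rfl | hy'
    · exact sub_eq_zero.mp hw'z
    · exact sub_eq_zero.mp (hGz y hy')
  · intro y hy
    rcases Finset.mem_insert.mp hy with rfl | hy'
    · exact hw'F
    · exact hGF y hy'

/-- The main zero-count bound for levels `n ≥ 2`. -/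
lemma Qbound (hJ1 : J 1 = J1fun)
    (hJrec : ∀ n, 1 ≤ n → ∀ x : ℝ, J (n + 1) x = J (n + 1) 0 + ∫ t in (0:ℝ)..x, J n t)
    (hJmean : ∀ n, 1 ≤ n → (∫ x in (0:ℝ)..(2 * π), J (n + 1) x) = 0)
    (hk : 1 ≤ k) :
    ∀ n, 2 ≤ n → ∀ q : ℝ → ℝ, TP k q → ∀ F : Finset ℝ, ↑F ⊆ Set.Ioc (-π) π →
      (∀ x ∈ F, J n x = q x) → F.card ≤ 2*k+2 := by
  intro n hn
  induction n, hn using Nat.le_induction with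
  | base =>
      intro q hq F hF hz
      obtain ⟨q1, hq1, hdq⟩ := TP_deriv hq
      obtain ⟨q2, hq2, hdq1⟩ := TP_deriv hq1
      exact (LB1 hJ1 hJrec hJmean hq hq1 hq2 hdq hdq1 F hF hz).1
  | succ n hn IH =>
      intro q hq F hF hz
      by_cases h2 : F.card ≤ 2
      · omega
      · obtain ⟨q1, hq1, hdq⟩ := TP_deriv hq
        obtain ⟨T, hTcard, hTsub, hTz, -⟩ :=
          cyc hJ1 hJrec hJmean hn hq hq1 hdq F hF hz (by omega)
        have := IH q1 hq1 T hTsub hTz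
        omega

/-- Simplicity at levels `n ≥ 2` (`m = n + 1 ≥ 3`). -/
lemma S3 (hJ1 : J 1 = J1fun)
    (hJrec : ∀ n, 1 ≤ n → ∀ x : ℝ, J (n + 1) x = J (n + 1) 0 + ∫ t in (0:ℝ)..x, J n t)
    (hJmean : ∀ n, 1 ≤ n → (∫ x in (0:ℝ)..(2 * π), J (n + 1) x) = 0)
    (hk : 1 ≤ k) {n : ℕ} (hn : 2 ≤ n) (hq : TP k q) (hq1 : TP k q1)
    (hdq : ∀ x, HasDerivAt q (q1 x) x)
    (F : Finset ℝ) (hF : ↑F ⊆ Set.Ioc (-π) π) (hz : ∀ x ∈ F, J (n+1) x = q x)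
    (hcard : F.card = 2*k+2) {x : ℝ} (hxF : x ∈ F) (hxz : J n x = q1 x) : False := by
  obtain ⟨T, hTcard, hTsub, hTz, hTF⟩ :=
    cyc hJ1 hJrec hJmean hn hq hq1 hdq F hF hz (by omega)
  have hxT : x ∉ T := fun h => hTF x h hxF
  have hsub : ↑(insert x T) ⊆ Set.Ioc (-π) π := by
    intro y hy
    rcases Finset.mem_insert.mp (Finset.mem_coe.mp hy) with rfl | hy'
    · exact hF (Finset.mem_coe.mpr hxF)
    · exact hTsub (Finset.mem_coe.mpr hy')
  have hzs : ∀ y ∈ insert x T, J n y = q1 y := by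
    intro y hy
    rcases Finset.mem_insert.mp hy with rfl | hy'
    · exact hxz
    · exact hTz y hy'
  have := Qbound hJ1 hJrec hJmean hk n hn q1 hq1 (insert x T) hsub hzs
  rw [Finset.card_insert_of_notMem hxT] at this
  omega

end Chain

lemma finite_bound {S : Set ℝ} {n : ℕ} (h : ∀ F : Finset ℝ, ↑F ⊆ S → F.card ≤ n) :
    S.Finite ∧ S.ncard ≤ n := by
  have hfin : S.Finite := by
    by_contra hinf
    obtain ⟨F, hFs, hFc⟩ := Set.Infinite.exists_subset_card_eq hinf (n+1)
    have := h F hFs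
    omega
  refine ⟨hfin, ?_⟩
  rw [Set.ncard_eq_toFinset_card S hfin]
  exact h hfin.toFinset (fun x hx => hfin.mem_toFinset.mp (Finset.mem_coe.mp hx))

end JmAux

/-- **Zero-count and simplicity for `J_m − p`.**
Let `J m` be the `(m−1)`-fold zero-mean primitive of the sawtooth `J₁`, and let
`p` be a trigonometric polynomial of degree ≤ k of the same parity as `m`.
Then `J_m − p` has at most `2k + 2` zeros on the circle `(−π, π]`, and if it has
exactly `2k + 2` zeros then all are simple (with the paper's conventions at
`x = π` for `m = 1, 2`). -/
theorem Jm_zero_count_and_simplicity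
    (k m : ℕ) (hk : 1 ≤ k) (hm : 1 ≤ m)
    (J : ℕ → ℝ → ℝ)
    (hJ1 : J 1 = J1fun)
    (hJrec : ∀ n, 1 ≤ n → ∀ x : ℝ, J (n + 1) x = J (n + 1) 0 + ∫ t in (0:ℝ)..x, J n t)
    (hJmean : ∀ n, 1 ≤ n → (∫ x in (0:ℝ)..(2 * π), J (n + 1) x) = 0)
    (p : ℝ → ℝ)
    (hparity : (Odd m → IsOddTrigPoly k p) ∧ (Even m → IsEvenTrigPoly k p)) :
    ({x ∈ Set.Ioc (-π) π | J m x = p x}).Finite ∧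
    ({x ∈ Set.Ioc (-π) π | J m x = p x}).ncard ≤ 2 * k + 2 ∧
    (({x ∈ Set.Ioc (-π) π | J m x = p x}).ncard = 2 * k + 2 →
      ∀ x ∈ {x ∈ Set.Ioc (-π) π | J m x = p x},
        if x = π then
          (if m = 1 then p π = 0
           else if m = 2 then False
           else deriv (fun y => J m y - p y) π ≠ 0)
        else deriv (fun y => J m y - p y) x ≠ 0) := by
  classical
  have hTP : JmAux.TP k p := by
    rcases Nat.even_or_odd m with he | ho
    · obtain ⟨a, ha⟩ := hparity.2 he
      exact ⟨a, fun _ => 0, fun x => by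
        rw [ha x]; apply Finset.sum_congr rfl; intro j _; ring⟩
    · obtain ⟨b, hb⟩ := hparity.1 ho
      exact ⟨fun _ => 0, b, fun x => by
        rw [hb x]; apply Finset.sum_congr rfl; intro j _; ring⟩
  obtain ⟨p1, hp1, hdp⟩ := JmAux.TP_deriv hTP
  obtain ⟨p2, hp2, hdp1⟩ := JmAux.TP_deriv hp1
  set Z := {x ∈ Set.Ioc (-π) π | J m x = p x} with hZdef
  have hcount : ∀ F : Finset ℝ, ↑F ⊆ Z → F.card ≤ 2*k+2 := by
    intro F hFZ
    have hF : ↑F ⊆ Set.Ioc (-π) π := fun x hx => (hFZ hx).1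
    have hz : ∀ x ∈ F, J m x = p x := fun x hx => (hFZ (Finset.mem_coe.mpr hx)).2
    by_cases hm1 : m = 1
    · subst hm1
      set F' := F.erase π with hF'
      have hF'sub : ↑F' ⊆ Set.Ioo (-π) π := by
        intro y hy
        obtain ⟨hyne, hyF⟩ := Finset.mem_erase.mp (Finset.mem_coe.mp hy)
        have := hF (Finset.mem_coe.mpr hyF)
        exact ⟨this.1, lt_of_le_of_ne this.2 hyne⟩
      have hz' : ∀ y ∈ F', y = p y := by
        intro y hy
        have hyIoo := hF'sub (Finset.mem_coe.mpr hy)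
        have h := hz y (Finset.mem_of_mem_erase hy)
        rwa [hJ1, JmAux.J1_eq_of_Ioo hyIoo] at h
      have h1 := JmAux.LA1 hTP hp1 hdp F' hF'sub hz'
      have h2 : F.card - 1 ≤ F'.card := Finset.pred_card_le_card_erase
      omega
    · exact JmAux.Qbound hJ1 hJrec hJmean hk m (by omega) p hTP F hF hz
  obtain ⟨hfin, hncard⟩ := JmAux.finite_bound hcount
  refine ⟨hfin, hncard, ?_⟩
  intro hcard2 x hxZ
  obtain ⟨hxI, hxz⟩ := hxZ
  set F := hfin.toFinset with hFdef
  have hFsub : ↑F ⊆ Set.Ioc (-π) π := by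
    intro y hy
    exact (hfin.mem_toFinset.mp (Finset.mem_coe.mp hy)).1
  have hFz : ∀ y ∈ F, J m y = p y := fun y hy => (hfin.mem_toFinset.mp hy).2
  have hFcard : F.card = 2*k+2 := by
    rw [← Set.ncard_eq_toFinset_card Z hfin]
    exact hcard2
  have hxF : x ∈ F := hfin.mem_toFinset.mpr ⟨hxI, hxz⟩
  by_cases hxπ : x = π
  · subst hxπ
    rw [if_pos rfl]
    by_cases hm1 : m = 1
    · rw [if_pos hm1]
      subst hm1
      rw [hJ1, JmAux.J1_pi] at hxz
      exact hxz.symm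
    rw [if_neg hm1]
    by_cases hm2 : m = 2
    · rw [if_pos hm2]
      subst hm2
      have := (JmAux.LB1 hJ1 hJrec hJmean hTP hp1 hp2 hdp hdp1 F hFsub hFz).2 hxF
      omega
    · rw [if_neg hm2]
      intro hderiv
      obtain ⟨n, rfl⟩ : ∃ n, m = n + 1 := ⟨m - 1, by omega⟩
      have hn2 : 2 ≤ n := by omega
      have hD : HasDerivAt (fun y => J (n+1) y - p y) (J n π - p1 π) π :=
        (JmAux.J_hasDerivAt hJ1 hJrec hJmean hn2 π).sub (hdp π)
      rw [hD.deriv] at hderiv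
      have hzz : J n π = p1 π := by linarith
      exact JmAux.S3 hJ1 hJrec hJmean hk hn2 hTP hp1 hdp F hFsub hFz hFcard hxF hzz
  · rw [if_neg hxπ]
    intro hderiv
    have hxIoo : x ∈ Set.Ioo (-π) π := ⟨hxI.1, lt_of_le_of_ne hxI.2 hxπ⟩
    by_cases hm1 : m = 1
    · subst hm1
      have h0 : round (x / (2*π)) = 0 := JmAux.round_eq_zero hxIoo
      have hx' : x - 2 * π * (round (x / (2 * π)) : ℝ) ∈ Set.Ioo (-π) π := by
        rw [h0]; push_cast; simpa using hxIoo
      have hDJ : HasDerivAt (J 1) 1 x := by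
        rw [hJ1]
        have haff : HasDerivAt (fun y : ℝ => y - 2 * π * ((round (x / (2 * π)) : ℤ) : ℝ)) 1 x :=
          (hasDerivAt_id x).sub_const _
        exact haff.congr_of_eventuallyEq (JmAux.J1_eventuallyEq hx')
      have hD := hDJ.fun_sub (hdp x)
      rw [hD.deriv] at hderiv
      have hp1x : p1 x = 1 := by linarith
      set F' := F.erase π with hF'
      have hF'sub : ↑F' ⊆ Set.Ioo (-π) π := by
        intro y hy
        obtain ⟨hyne, hyF⟩ := Finset.mem_erase.mp (Finset.mem_coe.mp hy)
        have := hFsub (Finset.mem_coe.mpr hyF)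
        exact ⟨this.1, lt_of_le_of_ne this.2 hyne⟩
      have hz' : ∀ y ∈ F', y = p y := by
        intro y hy
        have hyIoo := hF'sub (Finset.mem_coe.mpr hy)
        have h := hFz y (Finset.mem_of_mem_erase hy)
        rwa [hJ1, JmAux.J1_eq_of_Ioo hyIoo] at h
      have hxF' : x ∈ F' := Finset.mem_erase.mpr ⟨hxπ, hxF⟩
      have h1 := JmAux.LA2 hTP hp1 hdp F' hF'sub hz' hxF' hp1x
      have h2 : F.card - 1 ≤ F'.card := Finset.pred_card_le_card_erase
      omega
    by_cases hm2 : m = 2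
    · subst hm2
      have hD := JmAux.hasDerivAt_J2_sub hJ1 hJrec hdp hxIoo
      rw [hD.deriv] at hderiv
      have hxq : x = p1 x := by linarith
      exact JmAux.LB2 hJ1 hJrec hJmean hTP hp1 hp2 hdp hdp1 F hFsub hFz hFcard hxF hxπ hxq
    · obtain ⟨n, rfl⟩ : ∃ n, m = n + 1 := ⟨m - 1, by omega⟩
      have hn2 : 2 ≤ n := by omega
      have hD : HasDerivAt (fun y => J (n+1) y - p y) (J n x - p1 x) x :=
        (JmAux.J_hasDerivAt hJ1 hJrec hJmean hn2 x).sub (hdp x)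
      rw [hD.deriv] at hderiv
      have hzz : J n x = p1 x := by linarith
      exact JmAux.S3 hJ1 hJrec hJmean hk hn2 hTP hp1 hdp F hFsub hFz hFcard hxF hzz
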